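/- Let a > 0, τ > 0 and let z ∈ ℂ with Im(z) ≠ 0. Then there exists exactly one complex number w with Im(z)·Im(w) > 0 satisfying w = 1 / (a − z − aτ − a z τ w), i.e. satisfying the quadratic equation a z τ w² + (z − a + aτ) w + 1 = 0. -/

import Mathlib

lemma key_real (a τ p s x₁ x₂ η₁ η₂ : ℝ) (ha : 0 < a) (hτ : 0 < τ)
    (h1 : x₁ + x₂ = p - a + a*τ) (h2 : η₁ + η₂ = s)
    (h3 : x₁*x₂ - η₁*η₂ = a*τ*p) (h4 : x₁*η₂ + η₁*x₂ = a*τ*s)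
    (hs : s ≠ 0) (h5 : 0 < s*η₁) (h6 : 0 < s*η₂) : False := by
  have hPQ : (x₁ - a*τ)*(x₂ - a*τ) = η₁*η₂ + a^2*τ := by linear_combination h3 - a*τ*h1
  have hlin : (x₁ - a*τ)*η₂ + (x₂ - a*τ)*η₁ = 0 := by linear_combination h4 - a*τ*h2
  have hs2 : 0 < s^2 := by positivity
  have hηη : 0 < η₁*η₂ := by nlinarith [mul_pos h5 h6]
  have hPQpos : 0 < (x₁ - a*τ)*(x₂ - a*τ) := by nlinarith
  nlinarith [mul_pos hPQpos hηη, sq_nonneg ((x₁-a*τ)*η₂), sq_nonneg ((x₂-a*τ)*η₁)]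

lemma neg_inv_im_sign (s : ℝ) (v : ℂ) (hv : v ≠ 0) (h : 0 < s * v.im) :
    0 < s * (-v⁻¹).im := by
  have hn : 0 < Complex.normSq v := Complex.normSq_pos.2 hv
  rw [Complex.neg_im, Complex.inv_im, neg_div, neg_neg]
  have : s * (v.im / Complex.normSq v) = (s * v.im) / Complex.normSq v := by ring
  rw [this]
  exact div_pos h hn

theorem stmt18 (a τ : ℝ) (ha : 0 < a) (hτ : 0 < τ) (z : ℂ) (hz : z.im ≠ 0) :
    ∃! w : ℂ, 0 < z.im * w.im ∧
      (a : ℂ) * z * (τ : ℂ) * w ^ 2 + (z - (a : ℂ) + (a : ℂ) * (τ : ℂ)) * w + 1 = 0 := by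
  set B : ℂ := z - (a : ℂ) + (a : ℂ) * (τ : ℂ) with hB
  set C : ℂ := (a : ℂ) * z * (τ : ℂ) with hC
  have hzne : z ≠ 0 := fun h => hz (by simp [h])
  have hCne : C ≠ 0 :=
    mul_ne_zero (mul_ne_zero (Complex.ofReal_ne_zero.2 ha.ne') hzne)
      (Complex.ofReal_ne_zero.2 hτ.ne')
  have hBre : B.re = z.re - a + a*τ := by simp [hB]
  have hBim : B.im = z.im := by simp [hB]
  have hCre : C.re = a*τ*z.re := by simp [hC, Complex.mul_re, Complex.mul_im]; ring
  have hCim : C.im = a*τ*z.im := by simp [hC, Complex.mul_re, Complex.mul_im]; ring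
  -- roots of v^2 - B v + C = 0
  obtain ⟨d, hd⟩ := IsAlgClosed.exists_pow_nat_eq (B^2 - 4*C) (n := 2) (by norm_num)
  have hr1 : ((B+d)/2)^2 - B*((B+d)/2) + C = 0 := by linear_combination hd/4
  have hr2 : ((B-d)/2)^2 - B*((B-d)/2) + C = 0 := by linear_combination hd/4
  have him : ((B+d)/2).im + ((B-d)/2).im = z.im := by
    rw [← Complex.add_im]
    rw [show (B+d)/2 + (B-d)/2 = B from by ring, hBim]
  have hs2 : 0 < z.im^2 := by positivity
  have hcase : 0 < z.im * ((B+d)/2).im ∨ 0 < z.im * ((B-d)/2).im := by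
    by_contra h
    push_neg at h
    have hkey : z.im*((B+d)/2).im + z.im*((B-d)/2).im = z.im^2 := by
      rw [← mul_add, him]; ring
    linarith [h.1, h.2]
  -- pick the good root
  obtain ⟨v, hveq, hvsign⟩ :
      ∃ v : ℂ, v^2 - B*v + C = 0 ∧ 0 < z.im * v.im := by
    rcases hcase with h | h
    · exact ⟨(B+d)/2, hr1, h⟩
    · exact ⟨(B-d)/2, hr2, h⟩
  have hvne : v ≠ 0 := by
    intro h
    apply hCne
    simpa [h] using hveq
  obtain ⟨w, hwsign, hw2⟩ :
      ∃ w : ℂ, 0 < z.im * w.im ∧ C * w^2 + B * w + 1 = 0 := by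
    refine ⟨-v⁻¹, neg_inv_im_sign z.im v hvne hvsign, ?_⟩
    field_simp
    linear_combination hveq
  refine ⟨w, ⟨hwsign, hw2⟩, ?_⟩
  rintro y ⟨hy1, hy2⟩
  by_contra hne
  have hyne : y ≠ 0 := by
    intro h
    rw [h] at hy2
    simp at hy2
  have hwne : w ≠ 0 := by
    intro h
    rw [h] at hw2
    simp at hw2
  have hfac : (y - w) * (C*(y+w) + B) = 0 := by linear_combination hy2 - hw2
  have hsum : C*(y+w) + B = 0 := by
    rcases mul_eq_zero.1 hfac with h | h
    · exact absurd (sub_eq_zero.1 h) hne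
    · exact h
  have hprod : C*(y*w) = 1 := by linear_combination (-1)*hw2 + w*hsum
  have husum : (-y⁻¹) + (-w⁻¹) = B := by
    field_simp
    linear_combination (y+w)*hprod - w*y*hsum
  have huprod : (-y⁻¹) * (-w⁻¹) = C := by
    field_simp
    linear_combination -hprod
  have h1 : (-y⁻¹ : ℂ).re + (-w⁻¹ : ℂ).re = z.re - a + a*τ := by
    have := congrArg Complex.re husum
    rw [Complex.add_re, hBre] at this
    exact this
  have h2 : (-y⁻¹ : ℂ).im + (-w⁻¹ : ℂ).im = z.im := by
    have := congrArg Complex.im husum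
    rw [Complex.add_im, hBim] at this
    exact this
  have h3 : (-y⁻¹ : ℂ).re*(-w⁻¹ : ℂ).re - (-y⁻¹ : ℂ).im*(-w⁻¹ : ℂ).im = a*τ*z.re := by
    have := congrArg Complex.re huprod
    rw [Complex.mul_re, hCre] at this
    exact this
  have h4 : (-y⁻¹ : ℂ).re*(-w⁻¹ : ℂ).im + (-y⁻¹ : ℂ).im*(-w⁻¹ : ℂ).re = a*τ*z.im := by
    have := congrArg Complex.im huprod
    rw [Complex.mul_im, hCim] at this
    exact this
  exact key_real a τ z.re z.im (-y⁻¹ : ℂ).re (-w⁻¹ : ℂ).re (-y⁻¹ : ℂ).im (-w⁻¹ : ℂ).im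
    ha hτ h1 h2 h3 h4 hz (neg_inv_im_sign z.im y hyne hy1) (neg_inv_im_sign z.im w hwne hwsign)
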